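/- Let F₂ be a finite field of characteristic different from 2, let F be a subfield of F₂ with card(F₂) = q² where q = card(F) (i.e., F₂/F is an extension of degree 2). Then for every β ∈ F₂ with β ≠ 0: β + β⁻¹ ∈ F if and only if β ∈ F or (β^(q+1) = 1 and β ≠ 1 and β ≠ −1). Moreover the two alternatives are mutually exclusive: if β ∈ F and β^(q+1) = 1, then β = 1 or β = −1. -/
import Mathlib

theorem trace_of_pi_in_base_field (F₂ : Type*) [Field F₂] [Finite F₂]
    (hchar : ringChar F₂ ≠ 2) (F : Subfield F₂) (q : ℕ) (hq : q = Nat.card F)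
    (hcard : Nat.card F₂ = q ^ 2) :
    (∀ β : F₂, β ≠ 0 →
      (β + β⁻¹ ∈ F ↔ (β ∈ F ∨ (β ^ (q + 1) = 1 ∧ β ≠ 1 ∧ β ≠ -1)))) ∧
    (∀ β : F₂, β ∈ F → β ^ (q + 1) = 1 → β = 1 ∨ β = -1) := by
  classical
  haveI : Fintype F₂ := Fintype.ofFinite _
  haveI : Fintype F := Fintype.ofFinite _
  have hqF : Fintype.card F = q := by rw [hq, Nat.card_eq_fintype_card]
  have hq2 : 2 ≤ q := by rw [← hqF]; exact Fintype.one_lt_card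
  -- characteristic
  set p := ringChar F₂ with hp
  haveI : CharP F₂ p := ringChar.charP F₂
  haveI : CharP F p := by infer_instance
  obtain ⟨n, hpprime, hcardF⟩ := FiniteField.card F p
  haveI : Fact p.Prime := ⟨hpprime⟩
  have hqpn : q = p ^ (n : ℕ) := by rw [← hqF, hcardF]
  -- membership criterion : x ∈ F ↔ x ^ q = x
  have hmem : ∀ x : F₂, x ∈ F ↔ x ^ q = x := by
    have hforward : ∀ x : F₂, x ∈ F → x ^ q = x := by
      intro x hx
      have : (⟨x, hx⟩ : F) ^ q = ⟨x, hx⟩ := by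
        rw [← hqF]; exact FiniteField.pow_card _
      have := congrArg (Subtype.val) this
      simpa using this
    intro x
    refine ⟨hforward x, fun hx => ?_⟩
    -- counting
    have hne : (Polynomial.X ^ q - Polynomial.X : Polynomial F₂) ≠ 0 :=
      FiniteField.X_pow_card_sub_X_ne_zero F₂ hq2
    have hdeg : (Polynomial.X ^ q - Polynomial.X : Polynomial F₂).natDegree = q :=
      FiniteField.X_pow_card_sub_X_natDegree_eq F₂ hq2
    set S : Finset F₂ := Finset.univ.filter (fun x : F₂ => x ^ q = x) with hS
    have hScard : S.card ≤ q := by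
      have hsub : S ⊆ (Polynomial.X ^ q - Polynomial.X : Polynomial F₂).roots.toFinset := by
        intro y hy
        simp only [hS, Finset.mem_filter] at hy
        rw [Multiset.mem_toFinset, Polynomial.mem_roots hne]
        simp [Polynomial.IsRoot, sub_eq_zero, hy.2]
      calc S.card ≤ _ := Finset.card_le_card hsub
        _ ≤ (Polynomial.X ^ q - Polynomial.X : Polynomial F₂).roots.card :=
            Multiset.toFinset_card_le _
        _ ≤ q := by
            have := (Polynomial.X ^ q - Polynomial.X : Polynomial F₂).card_roots' 
            omega
    have hFsub : Finset.univ.filter (fun x : F₂ => x ∈ F) ⊆ S := by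
      intro y hy
      rw [hS, Finset.mem_filter]
      simp only [Finset.mem_filter, Finset.mem_univ, true_and] at hy
      exact ⟨Finset.mem_univ y, hforward y hy⟩
    have hFcard : (Finset.univ.filter (fun x : F₂ => x ∈ F)).card = q := by
      rw [← hqF]
      exact (Fintype.card_of_subtype _ (by simp)).symm
    have heq : Finset.univ.filter (fun x : F₂ => x ∈ F) = S :=
      Finset.eq_of_subset_of_card_le hFsub (by omega)
    have : x ∈ S := by simp [hS, hx]
    rw [← heq] at this
    simpa using this
  -- key algebraic identity
  have key : ∀ a b : F₂, a ≠ 0 → b ≠ 0 → (a + a⁻¹ = b + b⁻¹ ↔ a = b ∨ a * b = 1) := by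
    intro a b ha hb
    constructor
    · intro h
      have h2 : (a - b) * (a * b - 1) = 0 := by
        field_simp at h
        linear_combination h
      rcases mul_eq_zero.mp h2 with h3 | h3
      · exact Or.inl (sub_eq_zero.mp h3)
      · exact Or.inr (sub_eq_zero.mp h3)
    · rintro (rfl | hab)
      · rfl
      · have hb' : b = a⁻¹ := by field_simp; linear_combination hab
        rw [hb', inv_inv, add_comm]
  -- frobenius additivity
  have hfrob : ∀ a b : F₂, (a + b) ^ q = a ^ q + b ^ q := by
    intro a b
    rw [hqpn]
    exact add_pow_char_pow a b p n
  have main : ∀ β : F₂, β ≠ 0 → (β + β⁻¹ ∈ F ↔ β ∈ F ∨ β ^ (q + 1) = 1) := by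
    intro β hβ
    rw [hmem, hfrob, inv_pow, hmem β]
    have hβq : β ^ q ≠ 0 := pow_ne_zero _ hβ
    rw [key _ _ hβq hβ]
    constructor
    · rintro (h | h)
      · exact Or.inl h
      · exact Or.inr (by rw [pow_succ]; exact h)
    · rintro (h | h)
      · exact Or.inl h
      · exact Or.inr (by rw [← pow_succ]; exact h)
  have h1F : (1 : F₂) ∈ F := F.one_mem
  have hneg1F : (-1 : F₂) ∈ F := F.neg_mem F.one_mem
  constructor
  · intro β hβ
    rw [main β hβ]
    constructor
    · rintro (h | h)
      · exact Or.inl h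
      · by_cases hβF : β ∈ F
        · exact Or.inl hβF
        · refine Or.inr ⟨h, ?_, ?_⟩
          · rintro rfl; exact hβF h1F
          · rintro rfl; exact hβF hneg1F
    · rintro (h | ⟨h, _, _⟩)
      · exact Or.inl h
      · exact Or.inr h
  · intro β hβF hβ
    have hβq : β ^ q = β := (hmem β).mp hβF
    have : β * β = 1 := by
      rw [pow_succ, hβq] at hβ; exact hβ
    exact mul_self_eq_one_iff.mp this
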